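/- Let e₁, e₂, e₃ ∈ ℂ with e₁ + e₂ + e₃ = 0, and set g₂ := −4(e₁e₂ + e₂e₃ + e₃e₁) and g₃ := 4e₁e₂e₃. Let b₁ ∈ ℂ with b₁ ≠ e₁, set μ₁ := 1/(2(b₁ − e₁)) and p := −(4b₁³ − g₂b₁ − g₃)·μ₁² + (6b₁² − g₂/2)·μ₁. Let U ⊆ ℂ be open, let P : ℂ → ℂ be twice differentiable on U with P'(x)² = 4(P(x) − e₁)(P(x) − e₂)(P(x) − e₃) and P''(x) = 6P(x)² − g₂/2 on U, and with P(x) ≠ b₁ on U; let w : ℂ → ℂ be twice differentiable and nonvanishing on U with w(x)² = P(x) − e₁ on U. Then −w''(x) + (P'(x)/(P(x) − b₁))·w'(x) − (μ₁·(4b₁³ − g₂b₁ − g₃)/(P(x) − b₁) + p)·w(x) = 0 for all x ∈ U. -/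

import Mathlib

/-- The co-℘ function `w = √(P - e₁)` solves the linear equation
`-w'' + (P'/(P - b₁)) w' - (μ₁ (4b₁³ - g₂b₁ - g₃)/(P - b₁) + p) w = 0`
for `μ₁ = 1/(2(b₁ - e₁))` and `p = -(4b₁³ - g₂b₁ - g₃) μ₁² + (6b₁² - g₂/2) μ₁`. -/
theorem co_p_function_solves_equation
    (e₁ e₂ e₃ : ℂ) (hsum : e₁ + e₂ + e₃ = 0)
    (g₂ g₃ : ℂ) (hg₂ : g₂ = -4 * (e₁ * e₂ + e₂ * e₃ + e₃ * e₁)) (hg₃ : g₃ = 4 * e₁ * e₂ * e₃)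
    (b₁ : ℂ) (hb : b₁ ≠ e₁)
    (μ₁ p : ℂ) (hμ : μ₁ = 1 / (2 * (b₁ - e₁)))
    (hp : p = -(4 * b₁ ^ 3 - g₂ * b₁ - g₃) * μ₁ ^ 2 + (6 * b₁ ^ 2 - g₂ / 2) * μ₁)
    (U : Set ℂ) (hU : IsOpen U)
    (P w : ℂ → ℂ)
    (hP : ∀ x ∈ U, DifferentiableAt ℂ P x)
    (hP' : ∀ x ∈ U, DifferentiableAt ℂ (deriv P) x)
    (hPsq : ∀ x ∈ U, (deriv P x) ^ 2 = 4 * (P x - e₁) * (P x - e₂) * (P x - e₃))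
    (hPdd : ∀ x ∈ U, deriv (deriv P) x = 6 * (P x) ^ 2 - g₂ / 2)
    (hPb : ∀ x ∈ U, P x ≠ b₁)
    (hw : ∀ x ∈ U, DifferentiableAt ℂ w x)
    (hw' : ∀ x ∈ U, DifferentiableAt ℂ (deriv w) x)
    (hw0 : ∀ x ∈ U, w x ≠ 0)
    (hwsq : ∀ x ∈ U, (w x) ^ 2 = P x - e₁) :
    ∀ x ∈ U, -deriv (deriv w) x + (deriv P x / (P x - b₁)) * deriv w x
      - (μ₁ * (4 * b₁ ^ 3 - g₂ * b₁ - g₃) / (P x - b₁) + p) * w x = 0 := by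
  -- first derivative identity on U: 2 w w' = P'
  have hA : ∀ y ∈ U, 2 * w y * deriv w y = deriv P y := by
    intro y hy
    have heq : (fun z => w z ^ 2) =ᶠ[nhds y] fun z => P z - e₁ :=
      Filter.eventuallyEq_of_mem (hU.mem_nhds hy) (fun z hz => hwsq z hz)
    have h1 : deriv (fun z => w z ^ 2) y = deriv (fun z => P z - e₁) y := heq.deriv_eq
    have h2 : deriv (fun z => w z ^ 2) y = 2 * w y * deriv w y := by
      have h0 : HasDerivAt (fun z => w z ^ 2) _ y := (hw y hy).hasDerivAt.pow 2
      have := h0.deriv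
      rw [this]; norm_num [mul_comm, mul_assoc, mul_left_comm]
    have h3 : deriv (fun z => P z - e₁) y = deriv P y := by
      simpa using ((hP y hy).hasDerivAt.sub_const e₁).deriv
    rw [h2, h3] at h1; exact h1
  intro x hx
  have hW := hw0 x hx
  have hPbx : P x - b₁ ≠ 0 := sub_ne_zero.mpr (hPb x hx)
  have hbe : b₁ - e₁ ≠ 0 := sub_ne_zero.mpr hb
  -- second derivative identity at x: 2 w'^2 + 2 w w'' = P''
  have hB : 2 * deriv w x * deriv w x + 2 * w x * deriv (deriv w) x = deriv (deriv P) x := by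
    have heq : (fun z => 2 * w z * deriv w z) =ᶠ[nhds x] deriv P :=
      Filter.eventuallyEq_of_mem (hU.mem_nhds hx) (fun z hz => hA z hz)
    have h1 : deriv (fun z => 2 * w z * deriv w z) x = deriv (deriv P) x := heq.deriv_eq
    have h2 : HasDerivAt (fun z => 2 * w z * deriv w z)
        (2 * deriv w x * deriv w x + 2 * w x * deriv (deriv w) x) x := by
      have h : HasDerivAt (fun z => 2 * w z * deriv w z) _ x := (((hw x hx).hasDerivAt.const_mul 2).mul (hw' x hx).hasDerivAt)
      have e : 2 * deriv w x * deriv w x + 2 * w x * deriv (deriv w) x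
          = 2 * deriv w x * deriv w x + 2 * w x * deriv (deriv w) x := rfl
      simpa [mul_assoc, mul_comm, mul_left_comm, two_mul, add_comm] using h
    rw [h2.deriv] at h1; exact h1
  have hAx := hA x hx
  have hsq := hwsq x hx
  have hPs := hPsq x hx
  have hPd := hPdd x hx
  set W := w x with hWdef
  set W1 := deriv w x with hW1def
  set W2 := deriv (deriv w) x with hW2def
  set Q := P x with hQdef
  set P1 := deriv P x with hP1def
  -- bracket identity
  have hbr : -2 * (6 * Q ^ 2 - g₂ / 2) * (Q - b₁) + 8 * (Q - e₁) * (Q - e₂) * (Q - e₃)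
      + 4 * (Q - e₂) * (Q - e₃) * (Q - b₁)
      - 4 * (Q - e₁) * (μ₁ * (4 * b₁ ^ 3 - g₂ * b₁ - g₃) + p * (Q - b₁)) = 0 := by
    have he3 : e₃ = -e₁ - e₂ := by linear_combination hsum
    obtain ⟨d, hb1, hd0⟩ : ∃ d, b₁ = e₁ + d ∧ d ≠ 0 :=
      ⟨b₁ - e₁, by ring, sub_ne_zero.mpr hb⟩
    subst hb1
    have hμ2 : 2 * d * μ₁ = 1 := by
      rw [hμ, show e₁ + d - e₁ = d by ring]
      field_simp
    have h4d : (4 : ℂ) * d ^ 2 ≠ 0 := mul_ne_zero (by norm_num) (pow_ne_zero _ hd0)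
    rw [hp, hg₂, hg₃, he3]
    have hbr4 : (-2 * (6 * Q ^ 2 - (-4 * (e₁ * e₂ + e₂ * (-e₁ - e₂) + (-e₁ - e₂) * e₁)) / 2) * (Q - (e₁ + d))
        + 8 * (Q - e₁) * (Q - e₂) * (Q - (-e₁ - e₂))
        + 4 * (Q - e₂) * (Q - (-e₁ - e₂)) * (Q - (e₁ + d))
        - 4 * (Q - e₁) * (μ₁ * (4 * (e₁ + d) ^ 3 - (-4 * (e₁ * e₂ + e₂ * (-e₁ - e₂) + (-e₁ - e₂) * e₁)) * (e₁ + d) - 4 * e₁ * e₂ * (-e₁ - e₂))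
          + (-(4 * (e₁ + d) ^ 3 - (-4 * (e₁ * e₂ + e₂ * (-e₁ - e₂) + (-e₁ - e₂) * e₁)) * (e₁ + d) - 4 * e₁ * e₂ * (-e₁ - e₂)) * μ₁ ^ 2
             + (6 * (e₁ + d) ^ 2 - (-4 * (e₁ * e₂ + e₂ * (-e₁ - e₂) + (-e₁ - e₂) * e₁)) / 2) * μ₁) * (Q - (e₁ + d)))) * (4 * d ^ 2) = 0 := by
      linear_combination ((4 * (Q - e₁) * (Q - (e₁ + d)) * (4 * (e₁ + d) ^ 3 - (4 * (e₁ ^ 2 + e₁ * e₂ + e₂ ^ 2)) * (e₁ + d) + 4 * e₁ * e₂ * (e₁ + e₂))) * (2 * d * μ₁ + 1)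
        + 2 * d * (-4 * (Q - e₁) * ((4 * (e₁ + d) ^ 3 - (4 * (e₁ ^ 2 + e₁ * e₂ + e₂ ^ 2)) * (e₁ + d) + 4 * e₁ * e₂ * (e₁ + e₂))
            + (6 * (e₁ + d) ^ 2 - 2 * (e₁ ^ 2 + e₁ * e₂ + e₂ ^ 2)) * (Q - (e₁ + d))))) * hμ2
    exact (mul_eq_zero.mp hbr4).resolve_right h4d
  have key4 : (-W2 * (Q - b₁) + P1 * W1
      - (μ₁ * (4 * b₁ ^ 3 - g₂ * b₁ - g₃) + p * (Q - b₁)) * W) * (4 * W ^ 3) = 0 := by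
    linear_combination (-2*W^2*(Q-b₁)) * hB + ((Q-b₁)*(2*W*W1 + P1) + 2*W^2*P1) * hAx
      + (-2*W^2*(Q-b₁)) * hPd + (2*W^2+(Q-b₁)) * hPs
      + (-2*(Q-b₁)*(6*Q^2-g₂/2) + 8*(Q-e₁)*(Q-e₂)*(Q-e₃)
          - 4*(W^2+Q-e₁)*(μ₁*(4*b₁^3-g₂*b₁-g₃)+p*(Q-b₁))) * hsq
      + (Q-e₁) * hbr
  have hW3 : (4 : ℂ) * W ^ 3 ≠ 0 := by
    simp [hW]
  have key : -W2 * (Q - b₁) + P1 * W1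
      - (μ₁ * (4 * b₁ ^ 3 - g₂ * b₁ - g₃) + p * (Q - b₁)) * W = 0 :=
    (mul_eq_zero.mp key4).resolve_right hW3
  field_simp
  linear_combination key
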